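/- For every (A,A)-bimodule M one has Diag(M) = Diag(M_Z), i.e. the canonical projection p_Z: M → M_Z = M/[Z(A),M] induces an isomorphism Diag(M) ≅ Diag(M_Z); consequently, if M and N are central bimodules then Diag(M ⊗_K N) = Diag(M ⊗_{Z(A)} N). -/

import Mathlib

set_option maxHeartbeats 1000000
set_option synthInstance.maxHeartbeats 400000

open TensorProduct MulOpposite

section TensorEndHoms
variable (R : Type*) [CommRing R]
variable (M N : Type*) [AddCommGroup M] [AddCommGroup N] [Module R M] [Module R N]

noncomputable def lTensorRingHom : Module.End R N →+* Module.End R (M ⊗[R] N) where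
  toFun f := f.lTensor M
  map_one' := LinearMap.lTensor_id M N
  map_mul' f g := LinearMap.lTensor_mul M f g
  map_zero' := LinearMap.lTensor_zero M
  map_add' f g := LinearMap.lTensor_add M f g

noncomputable def rTensorRingHom : Module.End R M →+* Module.End R (M ⊗[R] N) where
  toFun f := f.rTensor N
  map_one' := LinearMap.rTensor_id N M
  map_mul' f g := LinearMap.rTensor_mul N f g
  map_zero' := LinearMap.rTensor_zero N
  map_add' f g := LinearMap.rTensor_add N f g

end TensorEndHoms

section RestrictEnd
variable (R S M : Type*) [CommRing R] [CommRing S] [AddCommGroup M]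
  [Module R M] [Module S M] [LinearMap.CompatibleSMul M M R S]

noncomputable def endRestrictScalars : Module.End S M →+* Module.End R M where
  toFun f := f.restrictScalars R
  map_one' := rfl
  map_mul' f g := rfl
  map_zero' := rfl
  map_add' f g := rfl
end RestrictEnd

section Bimodule
variable (K A : Type*) [CommRing K] [Ring A] [Algebra K A]
variable (M N : Type*)
  [AddCommGroup M] [Module (A ⊗[K] Aᵐᵒᵖ) M] [Module (Subring.center A) M]
  [AddCommGroup N] [Module (A ⊗[K] Aᵐᵒᵖ) N] [Module (Subring.center A) N]

noncomputable def phiL [SMulCommClass (A ⊗[K] Aᵐᵒᵖ) (Subring.center A) M] :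
    A →+* Module.End (Subring.center A) (M ⊗[Subring.center A] N) :=
  (rTensorRingHom (Subring.center A) M N).comp
    ((Module.toModuleEnd (Subring.center A) M).comp
      (Algebra.TensorProduct.includeLeftRingHom : A →+* A ⊗[K] Aᵐᵒᵖ))

noncomputable def phiR [SMulCommClass (A ⊗[K] Aᵐᵒᵖ) (Subring.center A) N] :
    Aᵐᵒᵖ →+* Module.End (Subring.center A) (M ⊗[Subring.center A] N) :=
  (lTensorRingHom (Subring.center A) M N).comp
    ((Module.toModuleEnd (Subring.center A) N).comp
      ((Algebra.TensorProduct.includeRight : Aᵐᵒᵖ →ₐ[K] A ⊗[K] Aᵐᵒᵖ) :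
        Aᵐᵒᵖ →+* A ⊗[K] Aᵐᵒᵖ))


end Bimodule

section Assemble
variable (K A : Type*) [CommRing K] [Ring A] [Algebra K A]

theorem tmul_one_mem_center' {z : A} (hz : z ∈ Set.center A) :
    (z ⊗ₜ[K] (1 : Aᵐᵒᵖ)) ∈ Set.center (A ⊗[K] Aᵐᵒᵖ) := by
  rw [Semigroup.mem_center_iff]
  intro g
  induction g using TensorProduct.induction_on with
  | zero => simp
  | tmul a b =>
      have hza : a * z = z * a := by
        first
          | exact (hz.comm a).symm
          | exact hz.comm a
          | exact (hz.comm a).eq.symm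
          | exact (hz.comm a).eq
      simp [Algebra.TensorProduct.tmul_mul_tmul, hza]
  | add x y hx hy => simp [add_mul, mul_add, hx, hy]

def algebraMapCenter : K →+* Subring.center A where
  toFun k := ⟨algebraMap K A k, by
    rw [Subring.mem_center_iff]; intro g; exact (Algebra.commutes k g).symm⟩
  map_one' := by ext; simp
  map_mul' x y := by ext; simp
  map_zero' := by ext; simp
  map_add' x y := by ext; simp

variable (M N : Type*)
  [AddCommGroup M] [Module (A ⊗[K] Aᵐᵒᵖ) M] [Module (Subring.center A) M]
  [AddCommGroup N] [Module (A ⊗[K] Aᵐᵒᵖ) N] [Module (Subring.center A) N]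

/-- The bimodule structure on `M ⊗[Z(A)] N` with `a • (m ⊗ n) • b = (a • m) ⊗ (n • b)`. -/
noncomputable def tensorBimoduleZ
    (hM : ∀ (z : Subring.center A) (m : M), z • m = ((z : A) ⊗ₜ[K] (1 : Aᵐᵒᵖ)) • m)
    (hN : ∀ (z : Subring.center A) (n : N), z • n = ((z : A) ⊗ₜ[K] (1 : Aᵐᵒᵖ)) • n) :
    Module (A ⊗[K] Aᵐᵒᵖ) (M ⊗[Subring.center A] N) :=
  haveI hCM : SMulCommClass (A ⊗[K] Aᵐᵒᵖ) (Subring.center A) M := ⟨fun b z m => by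
    rw [hM z, hM z, ← mul_smul, ← mul_smul, (tmul_one_mem_center' K A z.2).comm b]⟩
  haveI hCN : SMulCommClass (A ⊗[K] Aᵐᵒᵖ) (Subring.center A) N := ⟨fun b z n => by
    rw [hN z, hN z, ← mul_smul, ← mul_smul, (tmul_one_mem_center' K A z.2).comm b]⟩
  letI modK : Module K (M ⊗[Subring.center A] N) :=
    Module.compHom _ (algebraMapCenter K A)
  haveI hcompat : LinearMap.CompatibleSMul (M ⊗[Subring.center A] N)
      (M ⊗[Subring.center A] N) K (Subring.center A) :=
    ⟨fun f k x => f.map_smul (algebraMapCenter K A k) x⟩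
  haveI hscc : SMulCommClass K K (M ⊗[Subring.center A] N) :=
    ⟨fun a b x => by rw [smul_smul, smul_smul, mul_comm]⟩
  haveI hist : IsScalarTower K K (M ⊗[Subring.center A] N) :=
    ⟨fun a b x => by rw [smul_eq_mul, ← smul_smul]⟩
  letI αL : A →ₐ[K] Module.End K (M ⊗[Subring.center A] N) :=
    { toRingHom := (endRestrictScalars K (Subring.center A) _).comp (phiL K A M N)
      commutes' := fun k => by
        apply LinearMap.ext
        intro x
        induction x using TensorProduct.induction_on with
        | zero => simp
        | tmul m n =>
            simp only [OneHom.toFun_eq_coe, MonoidHom.toFun_eq_coe, RingHom.toFun_eq_coe]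
            show ((algebraMap K A k ⊗ₜ[K] (1 : Aᵐᵒᵖ)) • m) ⊗ₜ[Subring.center A] n
              = ((algebraMapCenter K A k) • m) ⊗ₜ[Subring.center A] n
            rw [hM (algebraMapCenter K A k) m]
            rfl
        | add x y hx hy => simp only [map_add, hx, hy] }
  letI αR : Aᵐᵒᵖ →ₐ[K] Module.End K (M ⊗[Subring.center A] N) :=
    { toRingHom := (endRestrictScalars K (Subring.center A) _).comp (phiR K A M N)
      commutes' := fun k => by
        apply LinearMap.ext
        intro x
        induction x using TensorProduct.induction_on with
        | zero => simp
        | tmul m n =>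
            simp only [OneHom.toFun_eq_coe, MonoidHom.toFun_eq_coe, RingHom.toFun_eq_coe]
            show m ⊗ₜ[Subring.center A] ((((1 : A) ⊗ₜ[K] (algebraMap K Aᵐᵒᵖ k)) :
                A ⊗[K] Aᵐᵒᵖ) • n)
              = ((algebraMapCenter K A k) • m) ⊗ₜ[Subring.center A] n
            rw [show (((1 : A) ⊗ₜ[K] (algebraMap K Aᵐᵒᵖ k)) : A ⊗[K] Aᵐᵒᵖ)
                  = ((algebraMapCenter K A k : Subring.center A) : A) ⊗ₜ[K] (1 : Aᵐᵒᵖ) by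
                rw [Algebra.algebraMap_eq_smul_one, tmul_smul, smul_tmul',
                  ← Algebra.algebraMap_eq_smul_one]
                rfl]
            rw [← hN (algebraMapCenter K A k) n]
            exact (smul_tmul (algebraMapCenter K A k) m n).symm
        | add x y hx hy => simp only [map_add, hx, hy] }
  Module.compHom _ (Algebra.TensorProduct.lift αL αR (fun a b => by
    apply LinearMap.ext
    intro x
    induction x using TensorProduct.induction_on with
    | zero => simp
    | tmul m n => rfl
    | add x y hx hy =>
        show (αL a * αR b) (x + y) = (αR b * αL a) (x + y)
        rw [map_add, map_add, hx, hy])).toRingHom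

end Assemble


section RightTensor
variable (R : Type*) [CommRing R] (S : Type*) [Ring S]
variable (M N : Type*) [AddCommGroup M] [AddCommGroup N] [Module R M] [Module R N]
variable [Module S N] [SMulCommClass S R N]

noncomputable def rightFactorEnd : S →+* Module.End R (M ⊗[R] N) where
  toFun s := (Module.toModuleEnd R N s).lTensor M
  map_one' := by
    show (Module.toModuleEnd R N (1 : S)).lTensor M = 1
    rw [map_one]; exact LinearMap.lTensor_id M N
  map_mul' s t := by
    show (Module.toModuleEnd R N (s * t)).lTensor M = _
    rw [map_mul]; exact LinearMap.lTensor_mul M _ _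
  map_zero' := by
    show (Module.toModuleEnd R N (0 : S)).lTensor M = 0
    rw [map_zero]; exact LinearMap.lTensor_zero M
  map_add' s t := by
    show (Module.toModuleEnd R N (s + t)).lTensor M = _
    rw [map_add]; exact LinearMap.lTensor_add M _ _

noncomputable def rightFactorModule : Module S (M ⊗[R] N) :=
  Module.compHom _ (rightFactorEnd R S M N)

end RightTensor

section Bimodule

variable (K A : Type*) [CommRing K] [Ring A] [Algebra K A]

noncomputable def leftAct (M : Type*) [AddCommGroup M] [Module (A ⊗[K] Aᵐᵒᵖ) M] :
    Module A M :=
  Module.compHom M (Algebra.TensorProduct.includeLeftRingHom : A →+* A ⊗[K] Aᵐᵒᵖ)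

noncomputable def rightAct (M : Type*) [AddCommGroup M] [Module (A ⊗[K] Aᵐᵒᵖ) M] :
    Module Aᵐᵒᵖ M :=
  Module.compHom M ((Algebra.TensorProduct.includeRight : Aᵐᵒᵖ →ₐ[K] A ⊗[K] Aᵐᵒᵖ) : Aᵐᵒᵖ →+* A ⊗[K] Aᵐᵒᵖ)

variable (M N : Type*)
  [AddCommGroup M] [Module (A ⊗[K] Aᵐᵒᵖ) M] [Module K M] [IsScalarTower K (A ⊗[K] Aᵐᵒᵖ) M]
  [AddCommGroup N] [Module (A ⊗[K] Aᵐᵒᵖ) N] [Module K N] [IsScalarTower K (A ⊗[K] Aᵐᵒᵖ) N]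

/-- The bimodule structure on `M ⊗[K] N` given by `a • (m ⊗ n) • b = (a • m) ⊗ (n • b)`. -/
noncomputable def tensorBimoduleK : Module (A ⊗[K] Aᵐᵒᵖ) (M ⊗[K] N) :=
  letI mA : Module A M := leftAct K A M
  letI nOp : Module Aᵐᵒᵖ N := rightAct K A N
  haveI h1 : SMulCommClass K A M :=
    ⟨fun k a m => smul_comm k (a ⊗ₜ[K] (1 : Aᵐᵒᵖ)) m⟩
  haveI h2 : SMulCommClass Aᵐᵒᵖ K N :=
    ⟨fun b k n => (smul_comm k ((1 : A) ⊗ₜ[K] b) n).symm⟩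
  letI mod_left : Module A (M ⊗[K] N) := TensorProduct.leftModule
  letI mod_right : Module Aᵐᵒᵖ (M ⊗[K] N) := rightFactorModule K Aᵐᵒᵖ M N
  haveI tower_left : IsScalarTower K A (M ⊗[K] N) := ⟨fun k a x => by
    induction x using TensorProduct.induction_on with
    | zero => simp
    | tmul m n =>
        show ((k • a) • m) ⊗ₜ[K] n = k • ((a • m) ⊗ₜ[K] n)
        have h : ((k • a) • m : M) = k • (a • m) := by
          show ((k • a) ⊗ₜ[K] (1 : Aᵐᵒᵖ)) • m = k • ((a ⊗ₜ[K] (1 : Aᵐᵒᵖ)) • m)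
          rw [← smul_assoc, smul_tmul']
        rw [h]
        exact (smul_tmul' k (a • m) n).symm
    | add x y hx hy => simp only [smul_add, hx, hy]⟩
  haveI tower_right : IsScalarTower K Aᵐᵒᵖ (M ⊗[K] N) := ⟨fun k b x => by
    induction x using TensorProduct.induction_on with
    | zero => simp
    | tmul m n =>
        show m ⊗ₜ[K] ((k • b) • n) = k • (m ⊗ₜ[K] (b • n))
        have h : ((k • b) • n : N) = k • (b • n) := by
          show ((1 : A) ⊗ₜ[K] (k • b)) • n = k • (((1 : A) ⊗ₜ[K] b) • n)
          rw [show ((1 : A) ⊗ₜ[K] (k • b) : A ⊗[K] Aᵐᵒᵖ) = k • ((1 : A) ⊗ₜ[K] b) from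
                tmul_smul k (1 : A) b,
              smul_assoc]
        rw [h]
        exact tmul_smul (R := K) k m (b • n)
    | add x y hx hy => simp only [smul_add, hx, hy]⟩
  haveI comm : SMulCommClass A Aᵐᵒᵖ (M ⊗[K] N) := ⟨fun a b x => by
    induction x using TensorProduct.induction_on with
    | zero => simp
    | tmul m n =>
        show a • (m ⊗ₜ[K] (b • n)) = b • ((a • m) ⊗ₜ[K] n)
        rw [smul_tmul']
        rfl
    | add x y hx hy => simp only [smul_add, hx, hy]⟩
  TensorProduct.Algebra.module

end Bimodule




section Statement
variable (K A : Type*) [CommRing K] [Ring A] [Algebra K A]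

/-- A bimodule (i.e. a module over `A ⊗[K] Aᵐᵒᵖ`) is *central* if every element of the
center of `A` acts the same way on the left and on the right. -/
def IsCentralBimodule (M : Type*) [AddCommGroup M] [Module (A ⊗[K] Aᵐᵒᵖ) M] : Prop :=
  ∀ z ∈ Set.center A, ∀ m : M, (z ⊗ₜ[K] (1 : Aᵐᵒᵖ)) • m = ((1 : A) ⊗ₜ[K] (op z)) • m

/-- `[Z(A), M]`: the sub-bimodule of `M` generated by the elements `z•m - m•z`. -/
def centerCommutator (M : Type*) [AddCommGroup M] [Module (A ⊗[K] Aᵐᵒᵖ) M] :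
    Submodule (A ⊗[K] Aᵐᵒᵖ) M :=
  Submodule.span _ {x : M | ∃ z ∈ Set.center A, ∃ m : M,
    x = (z ⊗ₜ[K] (1 : Aᵐᵒᵖ)) • m - ((1 : A) ⊗ₜ[K] (op z)) • m}

/-- `A` as a bimodule over itself. -/
noncomputable def bimoduleBA : Module (A ⊗[K] Aᵐᵒᵖ) A := TensorProduct.Algebra.module

attribute [local instance] bimoduleBA

variable (M : Type*) [AddCommGroup M] [Module (A ⊗[K] Aᵐᵒᵖ) M]

/-- The canonical bimodule homomorphism `c : M → A^{Hom(M,A)}`, `c m = (ω m)_ω`. -/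
noncomputable def cMap : M →ₗ[A ⊗[K] Aᵐᵒᵖ] ((M →ₗ[A ⊗[K] Aᵐᵒᵖ] A) → A) :=
  LinearMap.pi fun ω => ω

/-- `Diag(M)`: the image of the canonical map `c : M → A^{Hom(M,A)}`. -/
noncomputable def diagSub : Submodule (A ⊗[K] Aᵐᵒᵖ) ((M →ₗ[A ⊗[K] Aᵐᵒᵖ] A) → A) :=
  LinearMap.range (cMap K A M)


theorem diag_equiv_aux (P Q : Type*) [AddCommGroup P] [Module (A ⊗[K] Aᵐᵒᵖ) P]
    [AddCommGroup Q] [Module (A ⊗[K] Aᵐᵒᵖ) Q]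
    (f : P →ₗ[A ⊗[K] Aᵐᵒᵖ] Q) (hsurj : Function.Surjective f)
    (hfact : ∀ ω : P →ₗ[A ⊗[K] Aᵐᵒᵖ] A, ∃ ω' : Q →ₗ[A ⊗[K] Aᵐᵒᵖ] A, ∀ x, ω' (f x) = ω x) :
    ∃ e : (diagSub K A P) ≃ₗ[A ⊗[K] Aᵐᵒᵖ] (diagSub K A Q),
      ∀ p : P, e ((cMap K A P).rangeRestrict p) = (cMap K A Q).rangeRestrict (f p) := by
  classical
  let Φ : ((P →ₗ[A ⊗[K] Aᵐᵒᵖ] A) → A) →ₗ[A ⊗[K] Aᵐᵒᵖ] ((Q →ₗ[A ⊗[K] Aᵐᵒᵖ] A) → A) :=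
    LinearMap.funLeft _ A (fun ω : Q →ₗ[A ⊗[K] Aᵐᵒᵖ] A => ω.comp f)
  have key : ∀ p : P, Φ (cMap K A P p) = cMap K A Q (f p) := fun p => rfl
  have hmem : ∀ x : diagSub K A P, Φ x.1 ∈ diagSub K A Q := by
    rintro ⟨x, m, rfl⟩
    exact ⟨f m, (key m).symm⟩
  let g : diagSub K A P →ₗ[A ⊗[K] Aᵐᵒᵖ] diagSub K A Q :=
    (Φ.comp (diagSub K A P).subtype).codRestrict _ hmem
  have hinj : Function.Injective g := by
    rintro ⟨x, m, rfl⟩ ⟨y, m', rfl⟩ h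
    have h' : Φ (cMap K A P m) = Φ (cMap K A P m') := congrArg Subtype.val h
    apply Subtype.ext
    funext ω
    obtain ⟨ω', hω'⟩ := hfact ω
    calc (cMap K A P m) ω = ω' (f m) := (hω' m).symm
    _ = ω' (f m') := congrFun h' ω'
    _ = (cMap K A P m') ω := hω' m' 
  have hsurjg : Function.Surjective g := by
    rintro ⟨y, q, rfl⟩
    obtain ⟨m, rfl⟩ := hsurj q
    exact ⟨(cMap K A P).rangeRestrict m, Subtype.ext (key m)⟩
  refine ⟨LinearEquiv.ofBijective g ⟨hinj, hsurjg⟩, fun p => Subtype.ext ?_⟩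
  exact key p

/-- For every bimodule `M` one has `Diag(M) = Diag(M_Z)`: the canonical projection
`p_Z : M → M_Z = M/[Z(A),M]` induces an isomorphism `Diag(M) ≅ Diag(M_Z)`;
consequently, if `M` and `N` are central bimodules, then
`Diag(M ⊗[K] N) = Diag(M ⊗[Z(A)] N)`. -/
theorem diag_eq_diag_centerQuotient :
    (∀ (M : Type*) [AddCommGroup M] [Module (A ⊗[K] Aᵐᵒᵖ) M],
      ∃ e : (diagSub K A M) ≃ₗ[A ⊗[K] Aᵐᵒᵖ]
          (diagSub K A (M ⧸ centerCommutator K A M)),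
        ∀ m : M,
          e ((cMap K A M).rangeRestrict m)
            = (cMap K A (M ⧸ centerCommutator K A M)).rangeRestrict
                ((centerCommutator K A M).mkQ m)) ∧
    (∀ (M N : Type*) [AddCommGroup M] [Module (A ⊗[K] Aᵐᵒᵖ) M] [Module K M]
        [IsScalarTower K (A ⊗[K] Aᵐᵒᵖ) M] [Module (Subring.center A) M]
        [AddCommGroup N] [Module (A ⊗[K] Aᵐᵒᵖ) N] [Module K N]
        [IsScalarTower K (A ⊗[K] Aᵐᵒᵖ) N] [Module (Subring.center A) N]
        (hM : ∀ (z : Subring.center A) (m : M), z • m = ((z : A) ⊗ₜ[K] (1 : Aᵐᵒᵖ)) • m)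
        (hN : ∀ (z : Subring.center A) (n : N), z • n = ((z : A) ⊗ₜ[K] (1 : Aᵐᵒᵖ)) • n),
      IsCentralBimodule K A M → IsCentralBimodule K A N →
        letI : Module (A ⊗[K] Aᵐᵒᵖ) (M ⊗[K] N) := tensorBimoduleK K A M N
        letI : Module (A ⊗[K] Aᵐᵒᵖ) (M ⊗[Subring.center A] N) :=
          tensorBimoduleZ K A M N hM hN
        ∃ e : (diagSub K A (M ⊗[K] N)) ≃ₗ[A ⊗[K] Aᵐᵒᵖ]
            (diagSub K A (M ⊗[Subring.center A] N)),
          ∀ (m : M) (n : N),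
            e ((cMap K A (M ⊗[K] N)).rangeRestrict (m ⊗ₜ[K] n))
              = (cMap K A (M ⊗[Subring.center A] N)).rangeRestrict
                  (m ⊗ₜ[Subring.center A] n)) := by
  constructor
  · intro M₀ _ _
    refine diag_equiv_aux K A M₀ (M₀ ⧸ centerCommutator K A M₀)
      (centerCommutator K A M₀).mkQ (Submodule.mkQ_surjective _) ?_
    intro ω
    have hle : centerCommutator K A M₀ ≤ LinearMap.ker ω := by
      rw [centerCommutator, Submodule.span_le]
      rintro x ⟨z, hz, m, rfl⟩
      have h1 : (z ⊗ₜ[K] (1 : Aᵐᵒᵖ)) • (ω m) = z * ω m := by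
        have h := TensorProduct.Algebra.smul_def (R := K) z (1 : Aᵐᵒᵖ) (ω m)
        rwa [one_smul, smul_eq_mul] at h
      have h2 : ((1 : A) ⊗ₜ[K] (op z)) • (ω m) = ω m * z := by
        have h := TensorProduct.Algebra.smul_def (R := K) (1 : A) (op z) (ω m)
        rwa [op_smul_eq_mul, smul_eq_mul, one_mul] at h
      simp only [SetLike.mem_coe, LinearMap.mem_ker, map_sub, map_smul, h1, h2,
        sub_eq_zero]
      exact hz.comm (ω m)
    exact ⟨(centerCommutator K A M₀).liftQ ω hle, fun x => rfl⟩
  · intro M N _ _ _ _ _ _ _ _ _ _ hM hN hMc hNc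
    -- the pinned scalar actions, as additive maps
    let σK : (A ⊗[K] Aᵐᵒᵖ) → (M ⊗[K] N) →+ (M ⊗[K] N) := fun r =>
      @DistribMulAction.toAddMonoidHom _ _ _ _
        (tensorBimoduleK K A M N).toDistribMulAction r
    let σZ : (A ⊗[K] Aᵐᵒᵖ) → (M ⊗[Subring.center A] N) →+ (M ⊗[Subring.center A] N) :=
      fun r => @DistribMulAction.toAddMonoidHom _ _ _ _
        (tensorBimoduleZ K A M N hM hN).toDistribMulAction r
    have σK_zero : ∀ x, σK 0 x = 0 := fun x =>
      @Module.zero_smul _ _ _ _ (tensorBimoduleK K A M N) x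
    have σK_add : ∀ r s x, σK (r + s) x = σK r x + σK s x := fun r s x =>
      @Module.add_smul _ _ _ _ (tensorBimoduleK K A M N) r s x
    have σZ_zero : ∀ x, σZ 0 x = 0 := fun x =>
      @Module.zero_smul _ _ _ _ (tensorBimoduleZ K A M N hM hN) x
    have σZ_add : ∀ r s x, σZ (r + s) x = σZ r x + σZ s x := fun r s x =>
      @Module.add_smul _ _ _ _ (tensorBimoduleZ K A M N hM hN) r s x
    have σK_tmul : ∀ (a : A) (b : Aᵐᵒᵖ) (m : M) (n : N),
        σK (a ⊗ₜ[K] b) (m ⊗ₜ[K] n)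
          = ((a ⊗ₜ[K] (1 : Aᵐᵒᵖ)) • m) ⊗ₜ[K] (((1 : A) ⊗ₜ[K] b) • n) :=
      fun _ _ _ _ => rfl
    have σZ_tmul : ∀ (a : A) (b : Aᵐᵒᵖ) (m : M) (n : N),
        σZ (a ⊗ₜ[K] b) (m ⊗ₜ[Subring.center A] n)
          = ((a ⊗ₜ[K] (1 : Aᵐᵒᵖ)) • m) ⊗ₜ[Subring.center A] (((1 : A) ⊗ₜ[K] b) • n) :=
      fun _ _ _ _ => rfl
    have hbimA : ∀ (x : A) (b : Aᵐᵒᵖ) (a : A), (x ⊗ₜ[K] b) • a = x * (a * unop b) :=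
      fun _ _ _ => rfl
    have hone : ((1 : A) ⊗ₜ[K] (1 : Aᵐᵒᵖ)) = (1 : A ⊗[K] Aᵐᵒᵖ) := rfl
    have hkM : ∀ (k : K) (m : M), k • m = (algebraMapCenter K A k) • m := by
      intro k m
      rw [hM (algebraMapCenter K A k) m, ← IsScalarTower.algebraMap_smul (A ⊗[K] Aᵐᵒᵖ) k m,
        Algebra.TensorProduct.algebraMap_apply]
      rfl
    have hkN : ∀ (k : K) (n : N), k • n = (algebraMapCenter K A k) • n := by
      intro k n
      rw [hN (algebraMapCenter K A k) n, ← IsScalarTower.algebraMap_smul (A ⊗[K] Aᵐᵒᵖ) k n,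
        Algebra.TensorProduct.algebraMap_apply]
      rfl
    -- the canonical additive map  M ⊗[K] N →+ M ⊗[Z(A)] N
    let f0 : M →+ (N →+ (M ⊗[Subring.center A] N)) :=
      { toFun := fun m =>
          { toFun := fun n => m ⊗ₜ[Subring.center A] n
            map_zero' := tmul_zero _ m
            map_add' := tmul_add m }
        map_zero' := by ext n; exact zero_tmul _ n
        map_add' := fun m m' => by ext n; exact add_tmul m m' n }
    let π₀ : (M ⊗[K] N) →+ (M ⊗[Subring.center A] N) :=
      TensorProduct.liftAddHom f0 (fun k m n => by
        show (k • m) ⊗ₜ[Subring.center A] n = m ⊗ₜ[Subring.center A] (k • n)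
        rw [hkM, hkN, smul_tmul])
    have π₀_tmul : ∀ (m : M) (n : N), π₀ (m ⊗ₜ[K] n) = m ⊗ₜ[Subring.center A] n :=
      fun _ _ => rfl
    let π : @LinearMap (A ⊗[K] Aᵐᵒᵖ) (A ⊗[K] Aᵐᵒᵖ) _ _ (RingHom.id _) (M ⊗[K] N)
        (M ⊗[Subring.center A] N) _ _ (tensorBimoduleK K A M N)
        (tensorBimoduleZ K A M N hM hN) :=
      @LinearMap.mk (A ⊗[K] Aᵐᵒᵖ) (A ⊗[K] Aᵐᵒᵖ) _ _ (RingHom.id _) (M ⊗[K] N)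
        (M ⊗[Subring.center A] N) _ _ (tensorBimoduleK K A M N)
        (tensorBimoduleZ K A M N hM hN) { toFun := π₀, map_add' := π₀.map_add }
        (fun r x => by
          show π₀ (σK r x) = σZ r (π₀ x)
          induction r using TensorProduct.induction_on with
          | zero => rw [σK_zero, map_zero, σZ_zero]
          | tmul a b =>
            induction x using TensorProduct.induction_on with
            | zero => rw [map_zero, map_zero, map_zero]
            | tmul m n => rfl
            | add x y hx hy => rw [map_add, map_add, map_add, map_add, hx, hy]
          | add r s hr hs => rw [σK_add, map_add, σZ_add, hr, hs])
    have π_tmul : ∀ (m : M) (n : N), π (m ⊗ₜ[K] n) = m ⊗ₜ[Subring.center A] n :=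
      fun _ _ => rfl
    have hsurj : Function.Surjective π := by
      intro y
      induction y using TensorProduct.induction_on with
      | zero => exact ⟨0, map_zero _⟩
      | tmul m n => exact ⟨m ⊗ₜ[K] n, π_tmul m n⟩
      | add x y hx hy =>
        obtain ⟨x', hx'⟩ := hx
        obtain ⟨y', hy'⟩ := hy
        exact ⟨x' + y', by rw [map_add, hx', hy']⟩
    have hfact : ∀ ω : @LinearMap (A ⊗[K] Aᵐᵒᵖ) (A ⊗[K] Aᵐᵒᵖ) _ _ (RingHom.id _)
        (M ⊗[K] N) A _ _ (tensorBimoduleK K A M N) (bimoduleBA K A),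
        ∃ ω' : @LinearMap (A ⊗[K] Aᵐᵒᵖ) (A ⊗[K] Aᵐᵒᵖ) _ _ (RingHom.id _)
          (M ⊗[Subring.center A] N) A _ _ (tensorBimoduleZ K A M N hM hN) (bimoduleBA K A),
          ∀ x, ω' (π x) = ω x := by
      intro ω
      have lω : ∀ (r : A ⊗[K] Aᵐᵒᵖ) (x : M ⊗[K] N), ω (σK r x) = r • ω x :=
        fun r x => @LinearMap.map_smul' _ _ _ _ _ _ _ _ _ (tensorBimoduleK K A M N) (bimoduleBA K A) ω r x
      let g : M →+ (N →+ A) :=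
        { toFun := fun m =>
            { toFun := fun n => ω (m ⊗ₜ[K] n)
              map_zero' := by show ω (m ⊗ₜ[K] (0 : N)) = 0; rw [tmul_zero, map_zero]
              map_add' := fun n n' => by
                show ω (m ⊗ₜ[K] (n + n')) = ω (m ⊗ₜ[K] n) + ω (m ⊗ₜ[K] n')
                rw [tmul_add, map_add] }
          map_zero' := by ext n; show ω ((0 : M) ⊗ₜ[K] n) = 0; rw [zero_tmul, map_zero]
          map_add' := fun m m' => by
            ext n
            show ω ((m + m') ⊗ₜ[K] n) = ω (m ⊗ₜ[K] n) + ω (m' ⊗ₜ[K] n)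
            rw [add_tmul, map_add] }
      have hbal : ∀ (z : Subring.center A) (m : M) (n : N),
          g (z • m) n = g m (z • n) := by
        intro z m n
        show ω ((z • m) ⊗ₜ[K] n) = ω (m ⊗ₜ[K] (z • n))
        have hz : (↑z : A) ∈ Set.center A := z.2
        rw [hM z m, hN z n, hNc (↑z : A) hz n]
        have e1 : (((↑z : A) ⊗ₜ[K] (1 : Aᵐᵒᵖ)) • m) ⊗ₜ[K] n
            = σK ((↑z : A) ⊗ₜ[K] (1 : Aᵐᵒᵖ)) (m ⊗ₜ[K] n) := by
          rw [σK_tmul, hone, one_smul]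
        have e2 : m ⊗ₜ[K] (((1 : A) ⊗ₜ[K] op (↑z : A)) • n)
            = σK ((1 : A) ⊗ₜ[K] op (↑z : A)) (m ⊗ₜ[K] n) := by
          rw [σK_tmul, hone, one_smul]
        rw [e1, e2, lω, lω, hbimA, hbimA]
        simp only [unop_one, unop_op, mul_one, one_mul]
        exact hz.comm (ω (m ⊗ₜ[K] n))
      let ω'₀ : (M ⊗[Subring.center A] N) →+ A := TensorProduct.liftAddHom g hbal
      have ω'₀_tmul : ∀ (m : M) (n : N),
          ω'₀ (m ⊗ₜ[Subring.center A] n) = ω (m ⊗ₜ[K] n) := fun _ _ => rfl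
      refine ⟨@LinearMap.mk (A ⊗[K] Aᵐᵒᵖ) (A ⊗[K] Aᵐᵒᵖ) _ _ (RingHom.id _)
          (M ⊗[Subring.center A] N) A _ _ (tensorBimoduleZ K A M N hM hN) (bimoduleBA K A)
          { toFun := ω'₀, map_add' := ω'₀.map_add }
          (fun r x => by
                  show ω'₀ (σZ r x) = r • ω'₀ x
                  induction r using TensorProduct.induction_on with
                  | zero => rw [σZ_zero, map_zero]; exact (@Module.zero_smul _ _ _ _ (bimoduleBA K A) (ω'₀ x)).symm
                  | tmul a b =>
                    induction x using TensorProduct.induction_on with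
                    | zero => rw [map_zero, map_zero, smul_zero]
                    | tmul m n =>
                      rw [σZ_tmul, ω'₀_tmul ((a ⊗ₜ[K] (1 : Aᵐᵒᵖ)) • m) (((1 : A) ⊗ₜ[K] b) • n),
                        ω'₀_tmul m n, ← lω (a ⊗ₜ[K] b) (m ⊗ₜ[K] n), σK_tmul]
                    | add x y hx hy => rw [map_add, map_add, map_add, smul_add, hx, hy]
                  | add r s hr hs => rw [σZ_add, map_add, hr, hs, Module.add_smul]), ?_⟩
      intro x
      induction x using TensorProduct.induction_on with
      | zero => simp only [map_zero]
      | tmul m n => rfl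
      | add x y hx hy => simp only [map_add]; rw [hx, hy]
    obtain ⟨e, he⟩ := @diag_equiv_aux K A _ _ _ (M ⊗[K] N) (M ⊗[Subring.center A] N) _
      (tensorBimoduleK K A M N) _ (tensorBimoduleZ K A M N hM hN) π hsurj hfact
    exact ⟨e, fun m n => (he (m ⊗ₜ[K] n)).trans (congrArg _ (π_tmul m n))⟩

end Statement
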